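/- Fix β > 0, J > 0, J₀ ∈ ℝ, h ∈ ℝ. For N ≥ 3 let Z_N := Σ_{σ ∈ {-1,1}^N} exp(βJ₀·Σ_{i=1}^N σ_i σ_{i+1} + (βJ/N)·Σ_{1≤i<j≤N} σ_i σ_j + βh·Σ_{i=1}^N σ_i), where indices are taken mod N (periodic one-dimensional chain, σ_{N+1} = σ_1). Then lim_{N→∞} (1/N)·log Z_N = sup_{u ∈ ℝ} [ −βJu²/2 + βJ₀ + log( cosh(βJu + βh) + √( sinh(βJu + βh)² + e^{−4βJ₀} ) ) ]. -/

import Mathlib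

open Real Filter Finset

/-- The spin value ±1 associated to a Boolean. -/
noncomputable def spin (b : Bool) : ℝ := if b then 1 else -1


noncomputable def Tm (K y : ℝ) : Matrix Bool Bool ℝ :=
  Matrix.of fun a b => Real.exp (K * spin a * spin b + y * spin a)

noncomputable def lamP (K y : ℝ) : ℝ :=
  Real.exp K * (Real.cosh y + Real.sqrt (Real.sinh y ^ 2 + Real.exp (-(4*K))))
noncomputable def lamM (K y : ℝ) : ℝ :=
  Real.exp K * (Real.cosh y - Real.sqrt (Real.sinh y ^ 2 + Real.exp (-(4*K))))

lemma sqrt_sq_eq (K y : ℝ) :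
    Real.sqrt (Real.sinh y ^ 2 + Real.exp (-(4*K))) ^ 2
      = Real.sinh y ^ 2 + Real.exp (-(4*K)) := by
  rw [Real.sq_sqrt]; positivity

lemma lam_sum (K y : ℝ) : lamP K y + lamM K y = 2 * Real.exp K * Real.cosh y := by
  unfold lamP lamM; ring

lemma lam_mul (K y : ℝ) :
    lamP K y * lamM K y = Real.exp (2*K) - Real.exp (-(2*K)) := by
  unfold lamP lamM
  have h1 : Real.cosh y ^ 2 - Real.sinh y ^ 2 = 1 := Real.cosh_sq_sub_sinh_sq y
  have h2 := sqrt_sq_eq K y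
  have e1 : Real.exp K * Real.exp K = Real.exp (2*K) := by
    rw [← Real.exp_add]; ring_nf
  have e2 : Real.exp (2*K) * Real.exp (-(4*K)) = Real.exp (-(2*K)) := by
    rw [← Real.exp_add]; ring_nf
  nlinarith [h1, h2, e1, e2]

lemma sqrt_pos' (K y : ℝ) :
    0 < Real.sqrt (Real.sinh y ^ 2 + Real.exp (-(4*K))) :=
  Real.sqrt_pos.2 (by positivity)

lemma lamP_pos (K y : ℝ) : 0 < lamP K y := by
  have := sqrt_pos' K y
  have h := Real.cosh_pos (x := y)
  unfold lamP; positivity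

lemma abs_lamM_lt (K y : ℝ) : |lamM K y| < lamP K y := by
  have hs := sqrt_pos' K y
  have hc := Real.cosh_pos (x := y)
  have he := Real.exp_pos K
  rw [abs_lt]; constructor <;> unfold lamP lamM <;> nlinarith

set_option linter.unnecessarySeqFocus false in
lemma Tm_CH (K y : ℝ) :
    Tm K y ^ 2 = (2 * Real.exp K * Real.cosh y) • Tm K y
      - (Real.exp (2*K) - Real.exp (-(2*K))) • (1 : Matrix Bool Bool ℝ) := by
  have hca : ∀ x : ℝ, Real.cosh x = (Real.exp x + Real.exp (-x))/2 := Real.cosh_eq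
  ext a b
  rw [pow_two, Matrix.mul_apply]
  rw [Fintype.sum_bool]
  cases a <;> cases b <;>
    simp [Tm, spin, Matrix.one_apply, hca, sq, ← Real.exp_add] <;>
    ring_nf <;>
    simp [← Real.exp_add, sq] <;>
    ring_nf <;> simp [Real.exp_zero] <;> ring

lemma path_sum (T : Matrix Bool Bool ℝ) :
    ∀ (n : ℕ) (U : Matrix Bool Bool ℝ),
      ∑ σ : Fin (n+1) → Bool,
        (∏ i : Fin n, T (σ i.castSucc) (σ i.succ)) * U (σ (Fin.last n)) (σ 0)
      = Matrix.trace (T ^ n * U) := by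
  intro n
  induction n with
  | zero =>
    intro U
    simp [Matrix.trace, Matrix.diag]
    rw [← (Equiv.funUnique (Fin 1) Bool).symm.sum_comp]
    simp [Equiv.funUnique]
  | succ n ih =>
    intro U
    have hc : ∀ (p : Bool × (Fin (n+1) → Bool)),
        (Fin.consEquiv (fun _ : Fin (n+2) => Bool)) p = Fin.cons p.1 p.2 := fun _ => rfl
    rw [← (Fin.consEquiv (fun _ : Fin (n+2) => Bool)).sum_comp]
    simp only [hc]
    rw [Fintype.sum_prod_type]
    have key : ∀ (a : Bool) (τ : Fin (n+1) → Bool),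
        (∏ i : Fin (n+1), T ((Fin.cons a τ : Fin (n+2) → Bool) i.castSucc)
            ((Fin.cons a τ : Fin (n+2) → Bool) i.succ))
          * U ((Fin.cons a τ : Fin (n+2) → Bool) (Fin.last (n+1)))
            ((Fin.cons a τ : Fin (n+2) → Bool) 0)
        = (∏ i : Fin n, T (τ i.castSucc) (τ i.succ)) *
            (U (τ (Fin.last n)) a * T a (τ 0)) := by
      intro a τ
      rw [Fin.prod_univ_succ]
      have h0 : T ((Fin.cons a τ : Fin (n+2) → Bool) (Fin.castSucc 0))
          ((Fin.cons a τ : Fin (n+2) → Bool) (Fin.succ 0)) = T a (τ 0) := by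
        simp
      have hlast : (Fin.cons a τ : Fin (n+2) → Bool) (Fin.last (n+1)) = τ (Fin.last n) := by
        rw [← Fin.succ_last, Fin.cons_succ]
      have hmid : ∀ i : Fin n,
          T ((Fin.cons a τ : Fin (n+2) → Bool) (Fin.castSucc i.succ))
            ((Fin.cons a τ : Fin (n+2) → Bool) i.succ.succ)
          = T (τ i.castSucc) (τ i.succ) := by
        intro i
        rw [← Fin.succ_castSucc, Fin.cons_succ, Fin.cons_succ]
      rw [h0, hlast, Fin.cons_zero, Finset.prod_congr rfl (fun i _ => hmid i)]
      ring
    rw [Finset.sum_comm]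
    calc ∑ τ : Fin (n+1) → Bool, ∑ a : Bool,
          (∏ i : Fin (n+1), T ((Fin.cons a τ : Fin (n+2) → Bool) i.castSucc)
            ((Fin.cons a τ : Fin (n+2) → Bool) i.succ))
          * U ((Fin.cons a τ : Fin (n+2) → Bool) (Fin.last (n+1)))
            ((Fin.cons a τ : Fin (n+2) → Bool) 0)
        = ∑ τ : Fin (n+1) → Bool,
            (∏ i : Fin n, T (τ i.castSucc) (τ i.succ)) * (U * T) (τ (Fin.last n)) (τ 0) := by
          refine Finset.sum_congr rfl fun τ _ => ?_
          rw [Finset.sum_congr rfl (fun a _ => key a τ), ← Finset.mul_sum, Matrix.mul_apply]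
      _ = Matrix.trace (T ^ n * (U * T)) := ih (U * T)
      _ = Matrix.trace (T ^ (n+1) * U) := by
          rw [← Matrix.mul_assoc, Matrix.trace_mul_comm, ← Matrix.mul_assoc, ← pow_succ']

lemma ring_sum (K y : ℝ) (m : ℕ) :
    ∑ σ : Fin (m+1) → Bool, Real.exp
      (K * ∑ i, spin (σ i) * spin (σ (finRotate (m+1) i)) + y * ∑ i, spin (σ i))
    = Matrix.trace (Tm K y ^ (m+1)) := by
  have step : ∀ σ : Fin (m+1) → Bool,
      Real.exp (K * ∑ i, spin (σ i) * spin (σ (finRotate (m+1) i)) + y * ∑ i, spin (σ i))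
      = (∏ i : Fin m, Tm K y (σ i.castSucc) (σ i.succ)) *
          Tm K y (σ (Fin.last m)) (σ 0) := by
    intro σ
    have h1 : K * ∑ i, spin (σ i) * spin (σ (finRotate (m+1) i)) + y * ∑ i, spin (σ i)
        = ∑ i : Fin (m+1), (K * spin (σ i) * spin (σ (i + 1)) + y * spin (σ i)) := by
      rw [Finset.sum_add_distrib, Finset.mul_sum, Finset.mul_sum]
      simp [finRotate_succ_apply, mul_assoc]
    rw [h1, Real.exp_sum, Fin.prod_univ_castSucc]
    congr 1
    · refine Finset.prod_congr rfl fun i _ => ?_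
      rw [Fin.coeSucc_eq_succ]
      rfl
    · rw [Fin.last_add_one]
      rfl
  rw [Finset.sum_congr rfl (fun σ _ => step σ), path_sum, ← pow_succ]

lemma trace_Tm_pow (K y : ℝ) : ∀ n : ℕ,
    Matrix.trace (Tm K y ^ n) = lamP K y ^ n + lamM K y ^ n := by
  have hsq : ∀ lam : ℝ, lam * lam = (lamP K y + lamM K y) * lam - lamP K y * lamM K y →
      lam ^ 2 = (2 * Real.exp K * Real.cosh y) * lam
        - (Real.exp (2*K) - Real.exp (-(2*K))) := by
    intro lam hl
    rw [pow_two, hl, lam_sum, lam_mul]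
  have hP2 := hsq (lamP K y) (by ring)
  have hM2 := hsq (lamM K y) (by ring)
  have key : ∀ n : ℕ,
      Matrix.trace (Tm K y ^ n) = lamP K y ^ n + lamM K y ^ n ∧
      Matrix.trace (Tm K y ^ (n+1)) = lamP K y ^ (n+1) + lamM K y ^ (n+1) := by
    intro n
    induction n with
    | zero =>
      constructor
      · simp [Matrix.trace]; norm_num
      · rw [pow_one, pow_one, pow_one, lam_sum]
        have ht : Matrix.trace (Tm K y) = Real.exp (K + y) + Real.exp (K - y) := by
          simp [Matrix.trace, Matrix.diag, Tm, spin]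
          ring_nf
        rw [ht, Real.cosh_eq, Real.exp_add, Real.exp_sub, Real.exp_neg]
        field_simp
    | succ n ih =>
      refine ⟨ih.2, ?_⟩
      have h2 : Tm K y ^ (n+2) = (2 * Real.exp K * Real.cosh y) • Tm K y ^ (n+1)
          - (Real.exp (2*K) - Real.exp (-(2*K))) • Tm K y ^ n := by
        have : Tm K y ^ (n+2) = Tm K y ^ n * Tm K y ^ 2 := by rw [← pow_add]
        rw [this, Tm_CH, Matrix.mul_sub, Matrix.mul_smul, Matrix.mul_smul, Matrix.mul_one,
          ← pow_succ]
      rw [h2, Matrix.trace_sub, Matrix.trace_smul, Matrix.trace_smul, smul_eq_mul, smul_eq_mul,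
        ih.1, ih.2]
      have hP : lamP K y ^ (n+2) = lamP K y ^ n * lamP K y ^ 2 := by rw [← pow_add]
      have hM : lamM K y ^ (n+2) = lamM K y ^ n * lamM K y ^ 2 := by rw [← pow_add]
      rw [hP, hM, hP2, hM2]
      ring
  exact fun n => (key n).1

lemma spin_sq (b : Bool) : spin b * spin b = 1 := by cases b <;> simp [spin]

lemma pair_sum (N : ℕ) (σ : Fin N → Bool) :
    ∑ p ∈ Finset.univ.filter (fun p : Fin N × Fin N => p.1 < p.2),
        spin (σ p.1) * spin (σ p.2)
    = ((∑ i, spin (σ i)) ^ 2 - N) / 2 := by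
  set sp : Fin N → ℝ := fun i => spin (σ i) with hs
  have hsq : (∑ i, sp i) ^ 2 = ∑ p ∈ (univ ×ˢ univ : Finset (Fin N × Fin N)), sp p.1 * sp p.2 := by
    rw [sq, Finset.sum_mul_sum, ← Finset.sum_product' (f := fun i j => sp i * sp j)]
  have hsplit := Finset.sum_filter_add_sum_filter_not (univ ×ˢ univ : Finset (Fin N × Fin N))
    (fun p => p.1 = p.2) (fun p => sp p.1 * sp p.2)
  have hdiag : ∑ p ∈ (univ ×ˢ univ : Finset (Fin N × Fin N)).filter (fun p => p.1 = p.2),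
      sp p.1 * sp p.2 = N := by
    rw [Finset.sum_filter, Finset.sum_product]
    have : ∀ i : Fin N, (∑ j : Fin N, if (i, j).1 = (i, j).2 then sp (i,j).1 * sp (i,j).2 else 0)
        = 1 := by
      intro i
      simp only
      rw [Finset.sum_ite_eq]
      simp [hs, spin_sq]
    rw [Finset.sum_congr rfl (fun i _ => this i)]
    simp
  have hne : (univ ×ˢ univ : Finset (Fin N × Fin N)).filter (fun p => ¬ p.1 = p.2)
      = ((univ ×ˢ univ : Finset (Fin N × Fin N)).filter (fun p => p.1 < p.2)) ∪
        ((univ ×ˢ univ : Finset (Fin N × Fin N)).filter (fun p => p.2 < p.1)) := by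
    ext p
    simp only [Finset.mem_filter, Finset.mem_union, Finset.mem_product, Finset.mem_univ,
      true_and, and_true]
    exact ne_iff_lt_or_gt
  have hdisj : Disjoint
      ((univ ×ˢ univ : Finset (Fin N × Fin N)).filter (fun p => p.1 < p.2))
      ((univ ×ˢ univ : Finset (Fin N × Fin N)).filter (fun p => p.2 < p.1)) := by
    rw [Finset.disjoint_left]
    intro p hp hq
    simp only [Finset.mem_filter] at hp hq
    exact absurd (hp.2.trans hq.2) (lt_irrefl _)
  have hswap : ∑ p ∈ (univ ×ˢ univ : Finset (Fin N × Fin N)).filter (fun p => p.2 < p.1),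
      sp p.1 * sp p.2
      = ∑ p ∈ (univ ×ˢ univ : Finset (Fin N × Fin N)).filter (fun p => p.1 < p.2),
        sp p.1 * sp p.2 := by
    refine Finset.sum_equiv (Equiv.prodComm (Fin N) (Fin N)) (fun p => ?_) (fun p _ => ?_)
    · simp
    · simp [mul_comm]
  have huniv : Finset.univ.filter (fun p : Fin N × Fin N => p.1 < p.2)
      = (univ ×ˢ univ : Finset (Fin N × Fin N)).filter (fun p => p.1 < p.2) := by
    rw [Finset.univ_product_univ]
  rw [huniv]
  rw [hne, Finset.sum_union hdisj, hswap, hdiag] at hsplit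
  rw [hsq] at *
  linarith

lemma sum_spin_eq (N : ℕ) (σ : Fin N → Bool) :
    ∑ i, spin (σ i) = 2*((Finset.univ.filter (fun i => σ i = true)).card : ℝ) - N := by
  have h : ∀ i : Fin N, spin (σ i) = 2*(if σ i = true then (1:ℝ) else 0) - 1 := by
    intro i; cases hσ : σ i <;> simp [spin, hσ] <;> norm_num
  rw [Finset.sum_congr rfl (fun i _ => h i), Finset.sum_sub_distrib, ← Finset.mul_sum,
    Finset.sum_boole]
  simp [Finset.card_univ]

noncomputable def gfun (β J J₀ h : ℝ) : ℝ → ℝ := fun u =>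
  -(β * J * u ^ 2) / 2 + β * J₀ +
    Real.log (Real.cosh (β * J * u + β * h) +
      Real.sqrt ((Real.sinh (β * J * u + β * h)) ^ 2 + Real.exp (-(4 * β * J₀))))

lemma log_lamP (K y : ℝ) :
    Real.log (lamP K y) = K + Real.log (Real.cosh y +
      Real.sqrt (Real.sinh y ^ 2 + Real.exp (-(4*K)))) := by
  have hpos : 0 < Real.cosh y + Real.sqrt (Real.sinh y ^ 2 + Real.exp (-(4*K))) := by
    have := Real.cosh_pos (x := y)
    have := Real.sqrt_nonneg (Real.sinh y ^ 2 + Real.exp (-(4*K)))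
    linarith
  rw [lamP, Real.log_mul (Real.exp_ne_zero K) (ne_of_gt hpos), Real.log_exp]

lemma gfun_eq (β J J₀ h u : ℝ) :
    gfun β J J₀ h u = -(β * J * u ^ 2) / 2 + Real.log (lamP (β*J₀) (β*J*u + β*h)) := by
  rw [gfun, log_lamP, show (4:ℝ)*(β*J₀) = 4*β*J₀ by ring]
  ring

lemma gfun_bddAbove (β J J₀ h : ℝ) (hβJ : 0 < β * J) :
    BddAbove (Set.range (gfun β J J₀ h)) := by
  refine ⟨β*J₀ + Real.log (2 + Real.exp (-(2*(β*J₀)))) + |β*h| + β*J/2, ?_⟩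
  rintro _ ⟨u, rfl⟩
  set y := β*J*u + β*h with hy
  set c2 := Real.exp (-(2*(β*J₀))) with hc2
  have hc2pos : 0 < c2 := Real.exp_pos _
  have hsq : Real.exp (-(4*β*J₀)) = c2^2 := by
    rw [hc2, sq, ← Real.exp_add]; ring_nf
  have h1 : Real.sqrt (Real.sinh y ^ 2 + Real.exp (-(4*β*J₀))) ≤ |Real.sinh y| + c2 := by
    rw [hsq]
    have : Real.sinh y ^ 2 + c2^2 ≤ (|Real.sinh y| + c2)^2 := by
      nlinarith [abs_nonneg (Real.sinh y), sq_abs (Real.sinh y)]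
    calc Real.sqrt (Real.sinh y ^ 2 + c2^2) ≤ Real.sqrt ((|Real.sinh y| + c2)^2) :=
          Real.sqrt_le_sqrt this
      _ = |Real.sinh y| + c2 := Real.sqrt_sq (by positivity)
  have h2 : Real.cosh y ≤ Real.exp |y| := by
    rw [← Real.cosh_abs, Real.cosh_eq]
    have : Real.exp (-|y|) ≤ Real.exp |y| := Real.exp_le_exp.2 (by
      have := abs_nonneg y; linarith)
    linarith
  have h3 : |Real.sinh y| ≤ Real.exp |y| := by
    rw [Real.abs_sinh, Real.sinh_eq]
    have := Real.exp_pos (-|y|)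
    have : Real.exp (-|y|) ≤ Real.exp |y| := Real.exp_le_exp.2 (by
      have := abs_nonneg y; linarith)
    have := Real.exp_pos (-|y|)
    linarith [Real.exp_pos (-|y|)]
  have h4 : Real.cosh y + Real.sqrt (Real.sinh y ^ 2 + Real.exp (-(4*β*J₀)))
      ≤ (2 + c2) * Real.exp |y| := by
    have hone : (1:ℝ) ≤ Real.exp |y| := Real.one_le_exp (abs_nonneg y)
    nlinarith
  have h5 : Real.log (Real.cosh y + Real.sqrt (Real.sinh y ^ 2 + Real.exp (-(4*β*J₀))))
      ≤ Real.log (2 + c2) + |y| := by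
    have hpos : 0 < Real.cosh y + Real.sqrt (Real.sinh y ^ 2 + Real.exp (-(4*β*J₀))) := by
      have := Real.cosh_pos (x := y)
      have := Real.sqrt_nonneg (Real.sinh y ^ 2 + Real.exp (-(4*β*J₀)))
      linarith
    calc Real.log (Real.cosh y + Real.sqrt (Real.sinh y ^ 2 + Real.exp (-(4*β*J₀))))
        ≤ Real.log ((2 + c2) * Real.exp |y|) := Real.log_le_log hpos h4
      _ = Real.log (2 + c2) + |y| := by
          rw [Real.log_mul (by positivity) (Real.exp_ne_zero _), Real.log_exp]
  have h6 : |y| ≤ β*J*|u| + |β*h| := by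
    rw [hy]
    calc |β*J*u + β*h| ≤ |β*J*u| + |β*h| := abs_add_le _ _
      _ = β*J*|u| + |β*h| := by rw [abs_mul, abs_of_pos hβJ]
  have h7 : -(β * J * u ^ 2) / 2 + β*J*|u| ≤ β*J/2 := by
    nlinarith [sq_nonneg (|u| - 1), sq_abs u]
  rw [gfun]
  have := le_trans h5 (by linarith : Real.log (2 + c2) + |y| ≤ Real.log (2 + c2) + β*J*|u| + |β*h|)
  linarith

lemma ising_sum (β J J₀ h : ℝ) (m : ℕ) (u : ℝ) :
    ∑ σ : Fin (m+1) → Bool, Real.exp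
      ((β*J₀) * ∑ i, spin (σ i) * spin (σ (finRotate (m+1) i)) + (β*J*u + β*h) * ∑ i, spin (σ i))
    = lamP (β*J₀) (β*J*u+β*h) ^ (m+1) + lamM (β*J₀) (β*J*u+β*h) ^ (m+1) := by
  rw [ring_sum, trace_Tm_pow]

set_option maxHeartbeats 1600000 in
/-- Free energy density of the one-dimensional nearest-neighbour Ising ring with
coupling `J₀`, perturbed by a fully connected pair interaction of strength `J/N` in a
uniform field `h` (`finRotate N` sends `i` to `i+1` cyclically):
`(1/N) log Z_N → sup_u [ -βJu²/2 + βJ₀ + log(cosh(βJu+βh) + √(sinh(βJu+βh)² + e^{-4βJ₀})) ]`. -/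
theorem oneD_ising_plus_fully_connected_free_energy
    (β J J₀ h : ℝ) (hβ : 0 < β) (hJ : 0 < J) :
    Tendsto
      (fun N : ℕ => (1 / (N : ℝ)) * Real.log
        (∑ σ : Fin N → Bool, Real.exp
          (β * J₀ * ∑ i, spin (σ i) * spin (σ (finRotate N i))
            + (β * J / (N : ℝ)) *
                ∑ p ∈ Finset.univ.filter (fun p : Fin N × Fin N => p.1 < p.2),
                  spin (σ p.1) * spin (σ p.2)
            + β * h * ∑ i, spin (σ i))))
      atTop
      (nhds (⨆ u : ℝ,
        (-(β * J * u ^ 2) / 2 + β * J₀ +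
          Real.log (Real.cosh (β * J * u + β * h) +
            Real.sqrt ((Real.sinh (β * J * u + β * h)) ^ 2 + Real.exp (-(4 * β * J₀))))))) := by
  have hβJ : 0 < β * J := mul_pos hβ hJ
  have hbdd := gfun_bddAbove β J J₀ h hβJ
  show Tendsto _ atTop (nhds (⨆ u : ℝ, gfun β J J₀ h u))
  set S := ⨆ u : ℝ, gfun β J J₀ h u with hSdef
  rw [tendsto_order]
  constructor
  · -- lower bound
    intro a ha
    obtain ⟨u, hau⟩ := exists_lt_of_lt_ciSup ha
    set P := lamP (β*J₀) (β*J*u+β*h) with hP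
    set Q := lamM (β*J₀) (β*J*u+β*h) with hQ
    have hPpos : 0 < P := lamP_pos _ _
    have hQP : |Q| < P := abs_lamM_lt _ _
    set q : ℝ := Q / P with hq
    have hqlt : |q| < 1 := by
      rw [hq, abs_div, abs_of_pos hPpos]
      exact (div_lt_one hPpos).2 hQP
    have hlseq : Tendsto (fun N : ℕ =>
        (1/(N:ℝ)) * (-(β*J)/2) + gfun β J J₀ h u + (1/(N:ℝ)) * Real.log (1 + q^N))
        atTop (nhds (gfun β J J₀ h u)) := by
      have t1 : Tendsto (fun N : ℕ => (1/(N:ℝ)) * (-(β*J)/2)) atTop (nhds 0) := by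
        simpa using tendsto_one_div_atTop_nhds_zero_nat.mul_const (-(β*J)/2)
      have t3log : Tendsto (fun N : ℕ => Real.log (1 + q^N)) atTop (nhds 0) := by
        have hpow := tendsto_pow_atTop_nhds_zero_of_abs_lt_one hqlt
        have h1 : Tendsto (fun N : ℕ => 1 + q^N) atTop (nhds 1) := by
          simpa using tendsto_const_nhds.add hpow
        have := (Real.continuousAt_log one_ne_zero).tendsto.comp h1
        simpa [Function.comp_def] using this
      have t3 : Tendsto (fun N : ℕ => (1/(N:ℝ)) * Real.log (1 + q^N)) atTop (nhds 0) := by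
        simpa using tendsto_one_div_atTop_nhds_zero_nat.mul t3log
      have := (t1.add (tendsto_const_nhds : Tendsto (fun _ : ℕ => gfun β J J₀ h u) atTop _)).add t3
      simpa using this
    filter_upwards [eventually_ge_atTop 1, hlseq.eventually (lt_mem_nhds hau)] with N hN1 hN2
    refine lt_of_lt_of_le hN2 ?_
    obtain ⟨m, rfl⟩ : ∃ m, N = m + 1 := ⟨N - 1, (Nat.succ_pred_eq_of_pos hN1).symm⟩
    have hNpos : (0:ℝ) < ((m+1:ℕ):ℝ) := by positivity
    have hNne : ((m+1:ℕ):ℝ) ≠ 0 := ne_of_gt hNpos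
    have hsumpos : 0 < P^(m+1) + Q^(m+1) := by
      have h1 : |Q|^(m+1) < P^(m+1) :=
        pow_lt_pow_left₀ hQP (abs_nonneg _) (Nat.succ_ne_zero m)
      have h2 : -(|Q|^(m+1)) ≤ Q^(m+1) := by
        rw [← abs_pow]; exact neg_abs_le _
      linarith
    have hterm : ∀ σ : Fin (m+1) → Bool,
        Real.exp ((-(β*J)/2 - ((m+1:ℕ):ℝ)*(β*J*u^2)/2) +
          ((β*J₀) * ∑ i, spin (σ i) * spin (σ (finRotate (m+1) i))
            + (β*J*u + β*h) * ∑ i, spin (σ i)))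
        ≤ Real.exp (β * J₀ * ∑ i, spin (σ i) * spin (σ (finRotate (m+1) i))
            + (β * J / ((m+1:ℕ):ℝ)) *
                ∑ p ∈ Finset.univ.filter (fun p : Fin (m+1) × Fin (m+1) => p.1 < p.2),
                  spin (σ p.1) * spin (σ p.2)
            + β * h * ∑ i, spin (σ i)) := by
      intro σ
      apply Real.exp_le_exp.2
      rw [pair_sum]
      set M := ∑ i, spin (σ i) with hM
      have key : (β*J/((m+1:ℕ):ℝ)) * ((M^2 - ((m+1:ℕ):ℝ))/2)
          - (-(β*J)/2 - ((m+1:ℕ):ℝ)*(β*J*u^2)/2 + (β*J*u)*M)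
          = β*J/(2*((m+1:ℕ):ℝ)) * (M - ((m+1:ℕ):ℝ)*u)^2 := by
        field_simp
        ring
      have hpos : 0 ≤ β*J/(2*((m+1:ℕ):ℝ)) * (M - ((m+1:ℕ):ℝ)*u)^2 := by positivity
      nlinarith [key, hpos]
    have hZlow : Real.exp (-(β*J)/2 - ((m+1:ℕ):ℝ)*(β*J*u^2)/2) * (P^(m+1) + Q^(m+1))
        ≤ ∑ σ : Fin (m+1) → Bool, Real.exp
          (β * J₀ * ∑ i, spin (σ i) * spin (σ (finRotate (m+1) i))
            + (β * J / ((m+1:ℕ):ℝ)) *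
                ∑ p ∈ Finset.univ.filter (fun p : Fin (m+1) × Fin (m+1) => p.1 < p.2),
                  spin (σ p.1) * spin (σ p.2)
            + β * h * ∑ i, spin (σ i)) := by
      rw [← ising_sum β J J₀ h m u, Finset.mul_sum]
      refine Finset.sum_le_sum fun σ _ => ?_
      rw [← Real.exp_add]
      exact hterm σ
    have hZpos : (0:ℝ) < ∑ σ : Fin (m+1) → Bool, Real.exp
          (β * J₀ * ∑ i, spin (σ i) * spin (σ (finRotate (m+1) i))
            + (β * J / ((m+1:ℕ):ℝ)) *
                ∑ p ∈ Finset.univ.filter (fun p : Fin (m+1) × Fin (m+1) => p.1 < p.2),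
                  spin (σ p.1) * spin (σ p.2)
            + β * h * ∑ i, spin (σ i)) :=
      Finset.sum_pos (fun σ _ => Real.exp_pos _) Finset.univ_nonempty
    have hlogZ : -(β*J)/2 - ((m+1:ℕ):ℝ)*(β*J*u^2)/2 + Real.log (P^(m+1) + Q^(m+1))
        ≤ Real.log (∑ σ : Fin (m+1) → Bool, Real.exp
          (β * J₀ * ∑ i, spin (σ i) * spin (σ (finRotate (m+1) i))
            + (β * J / ((m+1:ℕ):ℝ)) *
                ∑ p ∈ Finset.univ.filter (fun p : Fin (m+1) × Fin (m+1) => p.1 < p.2),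
                  spin (σ p.1) * spin (σ p.2)
            + β * h * ∑ i, spin (σ i))) := by
      have heq : -(β*J)/2 - ((m+1:ℕ):ℝ)*(β*J*u^2)/2 + Real.log (P^(m+1) + Q^(m+1))
          = Real.log (Real.exp (-(β*J)/2 - ((m+1:ℕ):ℝ)*(β*J*u^2)/2) * (P^(m+1) + Q^(m+1))) := by
        rw [Real.log_mul (Real.exp_ne_zero _) (ne_of_gt hsumpos), Real.log_exp]
      rw [heq]
      exact Real.log_le_log (by positivity) hZlow
    have hqpow : 0 < 1 + q^(m+1) := by
      have habs : |q^(m+1)| < 1 := by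
        rw [abs_pow]
        exact pow_lt_one₀ (abs_nonneg _) hqlt (Nat.succ_ne_zero m)
      have := (abs_lt.1 habs).1
      linarith
    have hdecomp : Real.log (P^(m+1) + Q^(m+1))
        = ((m+1:ℕ):ℝ) * Real.log P + Real.log (1 + q^(m+1)) := by
      have hPQ : P^(m+1) + Q^(m+1) = P^(m+1) * (1 + q^(m+1)) := by
        rw [hq, div_pow]
        field_simp
      rw [hPQ, Real.log_mul (by positivity) (ne_of_gt hqpow), Real.log_pow]
    have hgu : gfun β J J₀ h u = -(β*J*u^2)/2 + Real.log P := gfun_eq β J J₀ h u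
    calc (1/((m+1:ℕ):ℝ)) * (-(β*J)/2) + gfun β J J₀ h u
          + (1/((m+1:ℕ):ℝ)) * Real.log (1 + q^(m+1))
        = (1/((m+1:ℕ):ℝ)) * (-(β*J)/2 - ((m+1:ℕ):ℝ)*(β*J*u^2)/2
            + Real.log (P^(m+1) + Q^(m+1))) := by
          rw [hdecomp, hgu]
          field_simp
          ring
      _ ≤ (1/((m+1:ℕ):ℝ)) * Real.log (∑ σ : Fin (m+1) → Bool, Real.exp
          (β * J₀ * ∑ i, spin (σ i) * spin (σ (finRotate (m+1) i))
            + (β * J / ((m+1:ℕ):ℝ)) *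
                ∑ p ∈ Finset.univ.filter (fun p : Fin (m+1) × Fin (m+1) => p.1 < p.2),
                  spin (σ p.1) * spin (σ p.2)
            + β * h * ∑ i, spin (σ i))) := by
          exact mul_le_mul_of_nonneg_left hlogZ (by positivity)
  · -- upper bound
    intro a ha
    have hup0 : Tendsto (fun N : ℕ => (1/(N:ℝ)) * Real.log (2*((N:ℝ)+1))) atTop (nhds 0) := by
      have hlogdiv : Tendsto (fun x : ℝ => Real.log x / x) atTop (nhds 0) :=
        Real.isLittleO_log_id_atTop.tendsto_div_nhds_zero
      have haff : Tendsto (fun N : ℕ => 2*((N:ℝ)+1)) atTop atTop := by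
        apply Filter.Tendsto.const_mul_atTop two_pos
        exact tendsto_atTop_add_const_right _ 1 tendsto_natCast_atTop_atTop
      have hL : Tendsto (fun N : ℕ => Real.log (2*((N:ℝ)+1)) / (2*((N:ℝ)+1))) atTop (nhds 0) :=
        hlogdiv.comp haff
      have hR : Tendsto (fun N : ℕ => 2*((N:ℝ)+1)/(N:ℝ)) atTop (nhds 2) := by
        have hbase : Tendsto (fun N : ℕ => 2 + 2*(1/(N:ℝ))) atTop (nhds 2) := by
          have := tendsto_one_div_atTop_nhds_zero_nat.const_mul (2:ℝ)
          have h2 : Tendsto (fun _ : ℕ => (2:ℝ)) atTop (nhds 2) := tendsto_const_nhds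
          simpa using h2.add this
        refine Tendsto.congr' ?_ hbase
        filter_upwards [eventually_ge_atTop 1] with N hN
        have hNne : ((N:ℝ)) ≠ 0 := Nat.cast_ne_zero.2 (by omega)
        field_simp
      have hmul := hL.mul hR
      rw [zero_mul] at hmul
      refine Tendsto.congr' ?_ hmul
      filter_upwards [eventually_ge_atTop 1] with N hN
      have hNne : ((N:ℝ)) ≠ 0 := Nat.cast_ne_zero.2 (by omega)
      have h2ne : (2*((N:ℝ)+1)) ≠ 0 := by positivity
      field_simp
    have hup : Tendsto (fun N : ℕ => S + (1/(N:ℝ)) * Real.log (2*((N:ℝ)+1))) atTop (nhds S) := by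
      simpa using (tendsto_const_nhds : Tendsto (fun _ : ℕ => S) atTop _).add hup0
    filter_upwards [eventually_ge_atTop 1, hup.eventually (gt_mem_nhds ha)] with N hN1 hN2
    refine lt_of_le_of_lt ?_ hN2
    obtain ⟨m, rfl⟩ : ∃ m, N = m + 1 := ⟨N - 1, (Nat.succ_pred_eq_of_pos hN1).symm⟩
    have hNpos : (0:ℝ) < ((m+1:ℕ):ℝ) := by positivity
    have hNne : ((m+1:ℕ):ℝ) ≠ 0 := ne_of_gt hNpos
    set uu : ℕ → ℝ := fun k => (2*(k:ℝ) - ((m+1:ℕ):ℝ))/((m+1:ℕ):ℝ) with huu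
    have hterm : ∀ σ : Fin (m+1) → Bool,
        Real.exp (β * J₀ * ∑ i, spin (σ i) * spin (σ (finRotate (m+1) i))
            + (β * J / ((m+1:ℕ):ℝ)) *
                ∑ p ∈ Finset.univ.filter (fun p : Fin (m+1) × Fin (m+1) => p.1 < p.2),
                  spin (σ p.1) * spin (σ p.2)
            + β * h * ∑ i, spin (σ i))
        ≤ ∑ k ∈ Finset.range (m+2),
            Real.exp (-(β*J)/2 - ((m+1:ℕ):ℝ)*(β*J*(uu k)^2)/2) *
              Real.exp ((β*J₀) * ∑ i, spin (σ i) * spin (σ (finRotate (m+1) i))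
                + (β*J*(uu k) + β*h) * ∑ i, spin (σ i)) := by
      intro σ
      set c := (Finset.univ.filter (fun i => σ i = true)).card with hc
      have hck : c ∈ Finset.range (m+2) := by
        rw [Finset.mem_range]
        have : c ≤ m + 1 := by
          calc c ≤ Finset.univ.card := Finset.card_filter_le _ _
            _ = m + 1 := by simp
        omega
      have hEq : β * J₀ * ∑ i, spin (σ i) * spin (σ (finRotate (m+1) i))
            + (β * J / ((m+1:ℕ):ℝ)) *
                ∑ p ∈ Finset.univ.filter (fun p : Fin (m+1) × Fin (m+1) => p.1 < p.2),
                  spin (σ p.1) * spin (σ p.2)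
            + β * h * ∑ i, spin (σ i)
          = (-(β*J)/2 - ((m+1:ℕ):ℝ)*(β*J*(uu c)^2)/2) +
            ((β*J₀) * ∑ i, spin (σ i) * spin (σ (finRotate (m+1) i))
                + (β*J*(uu c) + β*h) * ∑ i, spin (σ i)) := by
        rw [pair_sum, sum_spin_eq, huu]
        field_simp
        ring
      rw [hEq, Real.exp_add]
      exact Finset.single_le_sum (f := fun k =>
        Real.exp (-(β*J)/2 - ((m+1:ℕ):ℝ)*(β*J*(uu k)^2)/2) *
          Real.exp ((β*J₀) * ∑ i, spin (σ i) * spin (σ (finRotate (m+1) i))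
            + (β*J*(uu k) + β*h) * ∑ i, spin (σ i)))
        (fun k _ => by positivity) hck
    have hZpos : (0:ℝ) < ∑ σ : Fin (m+1) → Bool, Real.exp
          (β * J₀ * ∑ i, spin (σ i) * spin (σ (finRotate (m+1) i))
            + (β * J / ((m+1:ℕ):ℝ)) *
                ∑ p ∈ Finset.univ.filter (fun p : Fin (m+1) × Fin (m+1) => p.1 < p.2),
                  spin (σ p.1) * spin (σ p.2)
            + β * h * ∑ i, spin (σ i)) :=
      Finset.sum_pos (fun σ _ => Real.exp_pos _) Finset.univ_nonempty
    have hZup1 : (∑ σ : Fin (m+1) → Bool, Real.exp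
          (β * J₀ * ∑ i, spin (σ i) * spin (σ (finRotate (m+1) i))
            + (β * J / ((m+1:ℕ):ℝ)) *
                ∑ p ∈ Finset.univ.filter (fun p : Fin (m+1) × Fin (m+1) => p.1 < p.2),
                  spin (σ p.1) * spin (σ p.2)
            + β * h * ∑ i, spin (σ i)))
        ≤ ∑ k ∈ Finset.range (m+2),
            Real.exp (-(β*J)/2 - ((m+1:ℕ):ℝ)*(β*J*(uu k)^2)/2) *
              (lamP (β*J₀) (β*J*(uu k)+β*h) ^ (m+1) + lamM (β*J₀) (β*J*(uu k)+β*h) ^ (m+1)) := by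
      calc (∑ σ : Fin (m+1) → Bool, Real.exp
          (β * J₀ * ∑ i, spin (σ i) * spin (σ (finRotate (m+1) i))
            + (β * J / ((m+1:ℕ):ℝ)) *
                ∑ p ∈ Finset.univ.filter (fun p : Fin (m+1) × Fin (m+1) => p.1 < p.2),
                  spin (σ p.1) * spin (σ p.2)
            + β * h * ∑ i, spin (σ i)))
          ≤ ∑ σ : Fin (m+1) → Bool, ∑ k ∈ Finset.range (m+2),
              Real.exp (-(β*J)/2 - ((m+1:ℕ):ℝ)*(β*J*(uu k)^2)/2) *
                Real.exp ((β*J₀) * ∑ i, spin (σ i) * spin (σ (finRotate (m+1) i))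
                  + (β*J*(uu k) + β*h) * ∑ i, spin (σ i)) :=
            Finset.sum_le_sum (fun σ _ => hterm σ)
        _ = ∑ k ∈ Finset.range (m+2), ∑ σ : Fin (m+1) → Bool,
              Real.exp (-(β*J)/2 - ((m+1:ℕ):ℝ)*(β*J*(uu k)^2)/2) *
                Real.exp ((β*J₀) * ∑ i, spin (σ i) * spin (σ (finRotate (m+1) i))
                  + (β*J*(uu k) + β*h) * ∑ i, spin (σ i)) := Finset.sum_comm
        _ = ∑ k ∈ Finset.range (m+2),
              Real.exp (-(β*J)/2 - ((m+1:ℕ):ℝ)*(β*J*(uu k)^2)/2) *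
                (lamP (β*J₀) (β*J*(uu k)+β*h) ^ (m+1) + lamM (β*J₀) (β*J*(uu k)+β*h) ^ (m+1)) := by
            refine Finset.sum_congr rfl fun k _ => ?_
            rw [← Finset.mul_sum, ising_sum β J J₀ h m (uu k)]
    have hkbound : ∀ k : ℕ,
        Real.exp (-(β*J)/2 - ((m+1:ℕ):ℝ)*(β*J*(uu k)^2)/2) *
          (lamP (β*J₀) (β*J*(uu k)+β*h) ^ (m+1) + lamM (β*J₀) (β*J*(uu k)+β*h) ^ (m+1))
        ≤ 2 * Real.exp (((m+1:ℕ):ℝ) * S) := by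
      intro k
      set Pk := lamP (β*J₀) (β*J*(uu k)+β*h) with hPk
      set Qk := lamM (β*J₀) (β*J*(uu k)+β*h) with hQk
      have hPkpos : 0 < Pk := lamP_pos _ _
      have hQkP : |Qk| < Pk := abs_lamM_lt _ _
      have h1 : Qk^(m+1) ≤ Pk^(m+1) := by
        calc Qk^(m+1) ≤ |Qk^(m+1)| := le_abs_self _
          _ = |Qk|^(m+1) := abs_pow _ _
          _ ≤ Pk^(m+1) := pow_le_pow_left₀ (abs_nonneg _) (le_of_lt hQkP) _
      have hPexp : Pk^(m+1) = Real.exp (((m+1:ℕ):ℝ) * Real.log Pk) := by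
        rw [Real.exp_nat_mul, Real.exp_log hPkpos]
      have hgS : gfun β J J₀ h (uu k) ≤ S := le_ciSup hbdd (uu k)
      have hgu : gfun β J J₀ h (uu k) = -(β*J*(uu k)^2)/2 + Real.log Pk := gfun_eq β J J₀ h (uu k)
      have hexple : (-(β*J)/2 - ((m+1:ℕ):ℝ)*(β*J*(uu k)^2)/2) + ((m+1:ℕ):ℝ) * Real.log Pk
          ≤ ((m+1:ℕ):ℝ) * S := by
        have heq : (-(β*J)/2 - ((m+1:ℕ):ℝ)*(β*J*(uu k)^2)/2) + ((m+1:ℕ):ℝ) * Real.log Pk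
            = -(β*J)/2 + ((m+1:ℕ):ℝ) * gfun β J J₀ h (uu k) := by
          rw [hgu]; ring
        rw [heq]
        have h2 : ((m+1:ℕ):ℝ) * gfun β J J₀ h (uu k) ≤ ((m+1:ℕ):ℝ) * S :=
          mul_le_mul_of_nonneg_left hgS (le_of_lt hNpos)
        linarith
      calc Real.exp (-(β*J)/2 - ((m+1:ℕ):ℝ)*(β*J*(uu k)^2)/2) * (Pk^(m+1) + Qk^(m+1))
          ≤ Real.exp (-(β*J)/2 - ((m+1:ℕ):ℝ)*(β*J*(uu k)^2)/2) * (2 * Pk^(m+1)) := by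
            apply mul_le_mul_of_nonneg_left (by linarith) (le_of_lt (Real.exp_pos _))
        _ = 2 * Real.exp ((-(β*J)/2 - ((m+1:ℕ):ℝ)*(β*J*(uu k)^2)/2) +
              ((m+1:ℕ):ℝ) * Real.log Pk) := by
            rw [Real.exp_add, hPexp]; ring
        _ ≤ 2 * Real.exp (((m+1:ℕ):ℝ) * S) := by
            have := Real.exp_le_exp.2 hexple
            linarith
    have hZup : (∑ σ : Fin (m+1) → Bool, Real.exp
          (β * J₀ * ∑ i, spin (σ i) * spin (σ (finRotate (m+1) i))
            + (β * J / ((m+1:ℕ):ℝ)) *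
                ∑ p ∈ Finset.univ.filter (fun p : Fin (m+1) × Fin (m+1) => p.1 < p.2),
                  spin (σ p.1) * spin (σ p.2)
            + β * h * ∑ i, spin (σ i)))
        ≤ 2*(((m+1:ℕ):ℝ)+1) * Real.exp (((m+1:ℕ):ℝ) * S) := by
      refine le_trans hZup1 (le_trans (Finset.sum_le_card_nsmul _ _ _ fun k _ => hkbound k) ?_)
      rw [Finset.card_range, nsmul_eq_mul]
      push_cast
      ring_nf
      exact le_refl _
    have hlog : Real.log (∑ σ : Fin (m+1) → Bool, Real.exp
          (β * J₀ * ∑ i, spin (σ i) * spin (σ (finRotate (m+1) i))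
            + (β * J / ((m+1:ℕ):ℝ)) *
                ∑ p ∈ Finset.univ.filter (fun p : Fin (m+1) × Fin (m+1) => p.1 < p.2),
                  spin (σ p.1) * spin (σ p.2)
            + β * h * ∑ i, spin (σ i)))
        ≤ Real.log (2*(((m+1:ℕ):ℝ)+1)) + ((m+1:ℕ):ℝ) * S := by
      calc Real.log (∑ σ : Fin (m+1) → Bool, Real.exp
          (β * J₀ * ∑ i, spin (σ i) * spin (σ (finRotate (m+1) i))
            + (β * J / ((m+1:ℕ):ℝ)) *
                ∑ p ∈ Finset.univ.filter (fun p : Fin (m+1) × Fin (m+1) => p.1 < p.2),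
                  spin (σ p.1) * spin (σ p.2)
            + β * h * ∑ i, spin (σ i)))
          ≤ Real.log (2*(((m+1:ℕ):ℝ)+1) * Real.exp (((m+1:ℕ):ℝ) * S)) :=
            Real.log_le_log hZpos hZup
        _ = Real.log (2*(((m+1:ℕ):ℝ)+1)) + ((m+1:ℕ):ℝ) * S := by
            rw [Real.log_mul (by positivity) (Real.exp_ne_zero _), Real.log_exp]
    calc (1/((m+1:ℕ):ℝ)) * Real.log (∑ σ : Fin (m+1) → Bool, Real.exp
          (β * J₀ * ∑ i, spin (σ i) * spin (σ (finRotate (m+1) i))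
            + (β * J / ((m+1:ℕ):ℝ)) *
                ∑ p ∈ Finset.univ.filter (fun p : Fin (m+1) × Fin (m+1) => p.1 < p.2),
                  spin (σ p.1) * spin (σ p.2)
            + β * h * ∑ i, spin (σ i)))
        ≤ (1/((m+1:ℕ):ℝ)) * (Real.log (2*(((m+1:ℕ):ℝ)+1)) + ((m+1:ℕ):ℝ) * S) :=
          mul_le_mul_of_nonneg_left hlog (by positivity)
      _ = S + (1/((m+1:ℕ):ℝ)) * Real.log (2*(((m+1:ℕ):ℝ)+1)) := by
          field_simp
          ring
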